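/- For every integer m and nonnegative integer k: 2·∑_{j=0}^{k} j²·T_{j+m} = −3·T_{m−1} − 5·T_m − 6·T_{m+1} + (k²−2k+3)·T_{k+m−1} + (2k²−2k+5)·T_{k+m} + (k²−4k+6)·T_{k+m+1}. -/

import Mathlib

/-- Tribonacci numbers on the naturals. -/
def tribN : ℕ → ℤ
  | 0 => 0
  | 1 => 1
  | 2 => 1
  | n + 3 => tribN (n + 2) + tribN (n + 1) + tribN n

/-- Tribonacci at negative indices: `tribNeg n = T (-n)`, via `T (-n) = 2·T (3-n) - T (4-n)`. -/
def tribNeg : ℕ → ℤ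
  | 0 => tribN 0
  | 1 => 2 * tribN 2 - tribN 3
  | 2 => 2 * tribN 1 - tribN 2
  | 3 => 2 * tribN 0 - tribN 1
  | 4 => 2 * tribNeg 1 - tribN 0
  | n + 5 => 2 * tribNeg (n + 2) - tribNeg (n + 1)

/-- Tribonacci sequence extended to all integers. -/
def T (m : ℤ) : ℤ := if 0 ≤ m then tribN m.toNat else tribNeg (-m).toNat

lemma T_ofNat (n : ℕ) : T n = tribN n := by simp [T]

lemma T_negNat (n : ℕ) : T (-(n:ℤ)) = tribNeg n := by
  cases n with
  | zero => simp [T, tribN, tribNeg]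
  | succ k =>
    have h : ¬ (0:ℤ) ≤ -((k:ℤ)+1) := by omega
    have h' : ((-(-((k:ℤ)+1))).toNat) = k + 1 := by omega
    rw [show (((k+1:ℕ)):ℤ) = ((k:ℤ)+1) by push_cast; ring] at *
    rw [T, if_neg h, h']

lemma T_back (n : ℕ) : T (-(n:ℤ)) = 2 * T (-(n:ℤ) + 3) - T (-(n:ℤ) + 4) := by
  match n with
  | 0 =>
    rw [show (-((0:ℕ):ℤ) + 3) = ((3:ℕ):ℤ) by norm_num,
        show (-((0:ℕ):ℤ) + 4) = ((4:ℕ):ℤ) by norm_num,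
        show (-((0:ℕ):ℤ)) = ((0:ℕ):ℤ) by norm_num,
        T_ofNat, T_ofNat, T_ofNat]
    rfl
  | 1 =>
    rw [show (-((1:ℕ):ℤ) + 3) = ((2:ℕ):ℤ) by norm_num,
        show (-((1:ℕ):ℤ) + 4) = ((3:ℕ):ℤ) by norm_num,
        T_negNat, T_ofNat, T_ofNat]
    rfl
  | 2 =>
    rw [show (-((2:ℕ):ℤ) + 3) = ((1:ℕ):ℤ) by norm_num,
        show (-((2:ℕ):ℤ) + 4) = ((2:ℕ):ℤ) by norm_num,
        T_negNat, T_ofNat, T_ofNat]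
    rfl
  | 3 =>
    rw [show (-((3:ℕ):ℤ) + 3) = ((0:ℕ):ℤ) by norm_num,
        show (-((3:ℕ):ℤ) + 4) = ((1:ℕ):ℤ) by norm_num,
        T_negNat, T_ofNat, T_ofNat]
    rfl
  | 4 =>
    rw [show (-((4:ℕ):ℤ) + 3) = -((1:ℕ):ℤ) by norm_num,
        show (-((4:ℕ):ℤ) + 4) = ((0:ℕ):ℤ) by norm_num,
        T_negNat, T_negNat, T_ofNat]
    rfl
  | (n+5) =>
    rw [show (-(((n+5:ℕ)):ℤ) + 3) = -(((n+2:ℕ)):ℤ) by push_cast; ring,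
        show (-(((n+5:ℕ)):ℤ) + 4) = -(((n+1:ℕ)):ℤ) by push_cast; ring,
        T_negNat, T_negNat, T_negNat]
    rfl

lemma T_rec : ∀ m : ℤ, T (m + 3) = T m + T (m + 1) + T (m + 2) := by
  intro m
  induction m using Int.induction_on with
  | zero =>
    rw [show (0:ℤ)+3 = ((3:ℕ):ℤ) by norm_num, show (0:ℤ)+1 = ((1:ℕ):ℤ) by norm_num,
        show (0:ℤ)+2 = ((2:ℕ):ℤ) by norm_num, show (0:ℤ) = ((0:ℕ):ℤ) by norm_num,
        T_ofNat, T_ofNat, T_ofNat, T_ofNat]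
    rfl
  | succ i ih =>
    rw [show ((i:ℤ)+1+3) = (((i+4:ℕ)):ℤ) by push_cast; ring,
        show ((i:ℤ)+1+2) = (((i+3:ℕ)):ℤ) by push_cast; ring,
        show ((i:ℤ)+1+1) = (((i+2:ℕ)):ℤ) by push_cast; ring,
        show ((i:ℤ)+1) = (((i+1:ℕ)):ℤ) by push_cast; ring,
        T_ofNat, T_ofNat, T_ofNat, T_ofNat]
    show tribN (i+1+3) = _
    rw [tribN]
    ring
  | pred i ih =>
    have hb := T_back (i+1)
    rw [show (-(((i+1:ℕ)):ℤ)) = (-(i:ℤ)-1) by push_cast; ring,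
        show (-(i:ℤ)-1+3) = (-(i:ℤ)+2) by ring,
        show (-(i:ℤ)-1+4) = (-(i:ℤ)+3) by ring] at hb
    rw [show (-(i:ℤ)-1+3) = (-(i:ℤ)+2) by ring,
        show (-(i:ℤ)-1+1) = (-(i:ℤ)) by ring,
        show (-(i:ℤ)-1+2) = (-(i:ℤ)+1) by ring]
    rw [show (-(i:ℤ)+3) = (-(i:ℤ)+3) by ring] at ih
    linear_combination ih - hb

theorem stmt14 : ∀ (m : ℤ) (k : ℕ),
    2 * ∑ j ∈ Finset.range (k + 1), (j : ℤ) ^ 2 * T (j + m) =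
      -3 * T (m - 1) - 5 * T m - 6 * T (m + 1) +
        ((k : ℤ) ^ 2 - 2 * k + 3) * T (k + m - 1) +
        (2 * (k : ℤ) ^ 2 - 2 * k + 5) * T (k + m) +
        ((k : ℤ) ^ 2 - 4 * k + 6) * T (k + m + 1) := by
  intro m k
  induction k with
  | zero =>
    simp only [Nat.cast_zero, zero_add, Finset.sum_range_one]
    ring
  | succ k ih =>
    rw [Finset.sum_range_succ]
    have hrec := T_rec ((k:ℤ) + m - 1)
    rw [show ((k:ℤ)+m-1+3) = (k:ℤ)+m+2 by ring,
        show ((k:ℤ)+m-1+1) = (k:ℤ)+m by ring,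
        show ((k:ℤ)+m-1+2) = (k:ℤ)+m+1 by ring] at hrec
    push_cast
    rw [show ((k:ℤ)+1+m-1) = (k:ℤ)+m by ring,
        show ((k:ℤ)+1+m) = (k:ℤ)+m+1 by ring,
        show ((k:ℤ)+m+1+1) = (k:ℤ)+m+2 by ring]
    linear_combination ih - ((k:ℤ)^2 - 2*k + 3) * hrec
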